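/- For every m, n ∈ ℕ and every f ∈ H^{(m,m)}(Ω), the function C_φ^n f lies in the domain of D_y^m and D_y^m (C_φ^n f) = Σ_{j=0}^{m} binom(m,j) (2n)^{m−j} C_φ^n (D_x^{m−j} D_y^{j} f). (This is the multinomial identity D_y^m C_φ^n = Σ_{|i_{n+1}|=m} 2^{m−i_{n+1}} multinom(m; i₁,…,i_{n+1}) C_φ^n D_x^{m−i_{n+1}} D_y^{i_{n+1}}, with the sum over (n+1)-tuples of nonnegative integers collapsed by the multinomial theorem.) -/

import Mathlib

open MeasureTheory Complex Filter Topology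

noncomputable section

instance : Fact (0 < 2 * Real.pi) := ⟨by positivity⟩
instance : Fact (0 < Real.pi) := ⟨Real.pi_pos⟩

/-- The phase space `Ω = (ℝ/2πℤ) × (ℝ/πℤ)`. -/
abbrev Omg : Type := AddCircle (2 * Real.pi) × AddCircle Real.pi

/-- The normalised Lebesgue measure `dm = dx dy / (2π²)` on `Ω`. -/
def mOmg : Measure Omg := (ENNReal.ofReal (2 * Real.pi ^ 2))⁻¹ • volume

/-- The Fourier basis functions `e_k(x,y) = exp(i k₁ x) exp(2 i k₂ y)`. -/
def eB (k : ℤ × ℤ) : Omg → ℂ := fun p => fourier k.1 p.1 * fourier k.2 p.2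

/-- Fourier coefficient `c_k(f) = (f, e_k)_{L²}`. -/
def coef (k : ℤ × ℤ) (f : Omg → ℂ) : ℂ := ∫ p, f p * (starRingEnd ℂ) (eB k p) ∂mOmg

/-- Sobolev weight `a_s(k) = 1 + |k₁|^{2s₁} + |2k₂|^{2s₂}` (real exponents). -/
def aW (s : ℝ × ℝ) (k : ℤ × ℤ) : ℝ :=
  1 + |(k.1 : ℝ)| ^ (2 * s.1) + |2 * (k.2 : ℝ)| ^ (2 * s.2)

/-- Membership in the Sobolev space `H^s(Ω)`. -/
def MemHs (s : ℝ × ℝ) (f : Omg → ℂ) : Prop :=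
  MemLp f 2 mOmg ∧ Summable (fun k => aW s k * ‖coef k f‖ ^ 2)

/-- The Sobolev norm `‖f‖_{H^s}`. -/
def normHs (s : ℝ × ℝ) (f : Omg → ℂ) : ℝ :=
  Real.sqrt (∑' k, aW s k * ‖coef k f‖ ^ 2)

/-- The doubling map `ℝ/πℤ → ℝ/2πℤ`, `y ↦ 2y`. -/
def dbl : AddCircle Real.pi → AddCircle (2 * Real.pi) :=
  AddCircle.equivAddCircle Real.pi (2 * Real.pi) Real.pi_ne_zero (by positivity)

/-- The inverse billiard collision map `φ(x,y) = (x - π + 2y, y)`. -/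
def phi : Omg → Omg :=
  fun p => (p.1 - ((Real.pi : ℝ) : AddCircle (2 * Real.pi)) + dbl p.2, p.2)

/-- The composition operator `(C_φ f)(x,y) = f(φ(x,y))`. -/
def Cphi : (Omg → ℂ) → (Omg → ℂ) := fun f p => f (phi p)

/-- The multiplication operator `(M_w f)(x,y) = w(x,y) f(x,y)`. -/
def Mw (w : Omg → ℝ) : (Omg → ℂ) → (Omg → ℂ) := fun f p => (w p : ℂ) * f p

/-- The transfer operator `L = M_w C_φ`. -/
def Lop (w : Omg → ℝ) : (Omg → ℂ) → (Omg → ℂ) := fun f => Mw w (Cphi f)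

/-- The frequency cut-off set `Λ_K = {k : |k₁| < K, |k₂| < K}`. -/
def Lam (K : ℕ) : Finset (ℤ × ℤ) := Finset.Ioo (-(K : ℤ)) (K : ℤ) ×ˢ Finset.Ioo (-(K : ℤ)) (K : ℤ)

/-- The Fourier projection `P_Λ f = ∑_{k ∈ Λ} c_k(f) e_k`. -/
def PL (Λ : Finset (ℤ × ℤ)) : (Omg → ℂ) → (Omg → ℂ) :=
  fun f p => ∑ k ∈ Λ, coef k f * eB k p

/-- The finite-rank approximation `L_K = P_K M_w C_φ P_K`. -/
def LK (w : Omg → ℝ) (K : ℕ) : (Omg → ℂ) → (Omg → ℂ) :=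
  fun f => PL (Lam K) (Lop w (PL (Lam K) f))

/-- Operator norm of a map `T`, viewed from `H^s` to `H^t`. -/
def opN (s t : ℝ × ℝ) (T : (Omg → ℂ) → (Omg → ℂ)) : ℝ :=
  sInf {M : ℝ | 0 ≤ M ∧ ∀ f, MemHs s f → normHs t (T f) ≤ M * normHs s f}

/-- `‖w‖_∞` for a (positive bounded) weight. -/
def wSup (w : Omg → ℝ) : ℝ := sSup (Set.range w)

/-- The standing assumptions on the weight `w`: smooth, positive, bounded away from
zero, `‖w‖_∞ < 1`, and independent of the first argument. -/
structure GoodWeight (w : Omg → ℝ) : Prop where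
  pos : ∀ p, 0 < w p
  smooth : ∃ W : ℝ → ℝ, ContDiff ℝ (⊤ : ℕ∞) W ∧
    ∀ (x : AddCircle (2 * Real.pi)) (y : ℝ), w (x, (y : AddCircle Real.pi)) = W y
  bdd_below : ∃ ε > 0, ∀ p, ε ≤ w p
  lt_one : sSup (Set.range w) < 1
  indep : ∀ (x x' : AddCircle (2 * Real.pi)) (y : AddCircle Real.pi), w (x, y) = w (x', y)

/-- The matrix `A = [[1,0],[1,1]]` acting on frequencies `(k₁,k₂) ↦ (k₁, k₁+k₂)`. -/
def Amap : ℤ × ℤ → ℤ × ℤ := fun k => (k.1, k.1 + k.2)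

/-- `IsD i j f g` : `g = D_x^i D_y^j f` in the weak (Fourier) sense, both in `L²`. -/
def IsD (i j : ℕ) (f g : Omg → ℂ) : Prop :=
  MemLp f 2 mOmg ∧ MemLp g 2 mOmg ∧
    ∀ k : ℤ × ℤ, coef k g = (Complex.I * (k.1 : ℂ)) ^ i * (2 * Complex.I * (k.2 : ℂ)) ^ j * coef k f


/-! ### Auxiliary lemmas for `stmt18` -/

lemma dbl_coe (y : ℝ) : dbl (y : AddCircle Real.pi) = ((2 * y : ℝ) : AddCircle (2 * Real.pi)) := by
  rw [dbl, AddCircle.equivAddCircle_apply_mk]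
  congr 1
  field_simp

lemma continuous_dbl : Continuous dbl := by
  have : dbl = ⇑(AddCircle.homeomorphAddCircle Real.pi (2 * Real.pi) Real.pi_ne_zero
      (by positivity)) := by
    funext y
    induction y using QuotientAddGroup.induction_on with
    | H x => rw [dbl_coe, AddCircle.homeomorphAddCircle_apply_mk]; congr 1; field_simp
  rw [this]
  exact Homeomorph.continuous _

lemma continuous_phi : Continuous phi := by
  unfold phi
  exact ((continuous_fst.sub continuous_const).add
    (continuous_dbl.comp continuous_snd)).prodMk continuous_snd

/-- `φ` as a measurable equivalence. -/
def phiE : Omg ≃ᵐ Omg where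
  toFun := phi
  invFun := fun p => (p.1 + ((Real.pi : ℝ) : AddCircle (2 * Real.pi)) - dbl p.2, p.2)
  left_inv := fun p => by
    simp only [phi]
    refine Prod.ext ?_ rfl
    simp only [sub_eq_add_neg]
    abel
  right_inv := fun p => by
    simp only [phi]
    refine Prod.ext ?_ rfl
    simp only [sub_eq_add_neg]
    abel
  measurable_toFun := continuous_phi.measurable
  measurable_invFun := by
    exact (((measurable_fst.add_const _).sub
      (continuous_dbl.measurable.comp measurable_snd))).prodMk measurable_snd

lemma mp_phi_vol : MeasurePreserving phi (volume : Measure Omg) volume := by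
  have h1 : MeasurePreserving (fun q : AddCircle Real.pi × AddCircle (2 * Real.pi) =>
      (q.1, q.2 - ((Real.pi : ℝ) : AddCircle (2 * Real.pi)) + dbl q.1))
      ((volume : Measure (AddCircle Real.pi)).prod volume)
      ((volume : Measure (AddCircle Real.pi)).prod volume) := by
    refine (MeasurePreserving.id _).skew_product (g := fun a c =>
      c - ((Real.pi : ℝ) : AddCircle (2 * Real.pi)) + dbl a) ?_ (ae_of_all _ fun a => ?_)
    · exact (measurable_snd.sub measurable_const).add
        (continuous_dbl.measurable.comp measurable_fst)
    · have : (fun c : AddCircle (2 * Real.pi) =>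
          c - ((Real.pi : ℝ) : AddCircle (2 * Real.pi)) + dbl a)
          = fun c => c + (-((Real.pi : ℝ) : AddCircle (2 * Real.pi)) + dbl a) := by
        funext c; abel
      show Measure.map (fun c : AddCircle (2 * Real.pi) =>
          c - ((Real.pi : ℝ) : AddCircle (2 * Real.pi)) + dbl a) volume = volume
      rw [this]
      exact (measurePreserving_add_right volume _).map_eq
  have hs1 : MeasurePreserving (Prod.swap : Omg → AddCircle Real.pi × AddCircle (2 * Real.pi))
      ((volume : Measure (AddCircle (2 * Real.pi))).prod volume)
      ((volume : Measure (AddCircle Real.pi)).prod volume) := Measure.measurePreserving_swap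
  have hs2 : MeasurePreserving (Prod.swap : AddCircle Real.pi × AddCircle (2 * Real.pi) → Omg)
      ((volume : Measure (AddCircle Real.pi)).prod volume)
      ((volume : Measure (AddCircle (2 * Real.pi))).prod volume) := Measure.measurePreserving_swap
  have key := hs2.comp (h1.comp hs1)
  rw [Measure.volume_eq_prod]
  exact key

lemma mp_phi : MeasurePreserving phi mOmg mOmg :=
  ⟨mp_phi_vol.measurable, by
    rw [mOmg, Measure.map_smul, mp_phi_vol.map_eq]⟩

instance : IsFiniteMeasure (volume : Measure Omg) := by
  constructor
  rw [Measure.volume_eq_prod]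
  exact measure_lt_top _ _

instance : IsFiniteMeasure mOmg := by
  constructor
  rw [mOmg, Measure.smul_apply, smul_eq_mul]
  exact ENNReal.mul_lt_top (by simp [Real.pi_ne_zero]; positivity) (measure_lt_top _ _)

lemma norm_eB (k : ℤ × ℤ) (p : Omg) : ‖eB k p‖ = 1 := by
  rw [eB, norm_mul, fourier_apply, fourier_apply]
  rw [Circle.norm_coe, Circle.norm_coe, one_mul]

lemma continuous_eB (k : ℤ × ℤ) : Continuous (eB k) := by
  unfold eB
  exact ((fourier k.1).continuous.comp continuous_fst).mul
    ((fourier k.2).continuous.comp continuous_snd)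

lemma eB_phi (k : ℤ × ℤ) (p : Omg) :
    eB (k.1, k.2 - k.1) (phi p) = (-1 : ℂ) ^ k.1 * eB k p := by
  obtain ⟨a, b⟩ := p
  induction a using QuotientAddGroup.induction_on with
  | H x =>
  induction b using QuotientAddGroup.induction_on with
  | H y =>
  have hphi : phi ((x : AddCircle (2 * Real.pi)), (y : AddCircle Real.pi))
      = (((x - Real.pi + 2 * y : ℝ) : AddCircle (2 * Real.pi)), (y : AddCircle Real.pi)) := by
    rw [phi, dbl_coe]
    refine Prod.ext ?_ rfl
    show (x : AddCircle (2 * Real.pi)) - (Real.pi : ℝ) + ((2 * y : ℝ) : AddCircle (2 * Real.pi)) = _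
    rw [← QuotientAddGroup.mk_sub, ← QuotientAddGroup.mk_add]
  rw [hphi]
  unfold eB
  rw [fourier_coe_apply, fourier_coe_apply, fourier_coe_apply, fourier_coe_apply]
  have hexp : (-1 : ℂ) ^ k.1 = Complex.exp ((k.1 : ℂ) * (-(Real.pi * Complex.I))) := by
    rw [Complex.exp_int_mul]
    congr 1
    rw [Complex.exp_neg, Complex.exp_pi_mul_I]
    norm_num
  rw [hexp, ← Complex.exp_add, ← Complex.exp_add, ← Complex.exp_add]
  have hpi : (Real.pi : ℂ) ≠ 0 := Complex.ofReal_ne_zero.mpr Real.pi_ne_zero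
  congr 1
  push_cast
  field_simp
  ring

lemma coef_Cphi (k : ℤ × ℤ) (h : Omg → ℂ) :
    coef k (Cphi h) = (-1 : ℂ) ^ k.1 * coef (k.1, k.2 - k.1) h := by
  set c : ℂ := (-1 : ℂ) ^ k.1 with hc
  have hc2 : c * c = 1 := by
    rw [hc, ← zpow_add₀ (by norm_num : (-1 : ℂ) ≠ 0),
      (by ring : k.1 + k.1 = 2 * k.1), zpow_mul]
    norm_num
  have hconj : (starRingEnd ℂ) c = c := by
    rw [hc, map_zpow₀]
    norm_num
  have hpt : ∀ p, (starRingEnd ℂ) (eB k p)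
      = c * (starRingEnd ℂ) (eB (k.1, k.2 - k.1) (phi p)) := by
    intro p
    rw [eB_phi, map_mul, hconj, ← mul_assoc, hc2, one_mul]
  unfold coef Cphi
  calc ∫ p, h (phi p) * (starRingEnd ℂ) (eB k p) ∂mOmg
      = ∫ p, c * ((fun q => h q * (starRingEnd ℂ) (eB (k.1, k.2 - k.1) q)) (phi p)) ∂mOmg := by
        refine integral_congr_ae (ae_of_all _ fun p => ?_)
        show h (phi p) * (starRingEnd ℂ) (eB k p)
          = c * ((fun q => h q * (starRingEnd ℂ) (eB (k.1, k.2 - k.1) q)) (phi p))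
        rw [hpt p]; dsimp only; ring
    _ = c * ∫ p, (fun q => h q * (starRingEnd ℂ) (eB (k.1, k.2 - k.1) q)) (phi p) ∂mOmg :=
        integral_const_mul _ _
    _ = c * ∫ q, h q * (starRingEnd ℂ) (eB (k.1, k.2 - k.1) q) ∂mOmg := by
        rw [mp_phi.integral_comp phiE.measurableEmbedding
          (fun q => h q * (starRingEnd ℂ) (eB (k.1, k.2 - k.1) q))]

lemma coef_iter (n : ℕ) (k : ℤ × ℤ) (h : Omg → ℂ) :
    coef k (Cphi^[n] h) = (-1 : ℂ) ^ ((n : ℤ) * k.1) * coef (k.1, k.2 - (n : ℤ) * k.1) h := by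
  induction n generalizing h with
  | zero => simp
  | succ n ih =>
    rw [Function.iterate_succ_apply, ih, coef_Cphi]
    rw [← mul_assoc, ← zpow_add₀ (by norm_num : (-1 : ℂ) ≠ 0)]
    congr 2
    · push_cast; ring
    · push_cast; ring

lemma memLp_iter {h : Omg → ℂ} (hh : MemLp h 2 mOmg) (n : ℕ) :
    MemLp (Cphi^[n] h) 2 mOmg := by
  induction n generalizing h with
  | zero => simpa using hh
  | succ n ih =>
    rw [Function.iterate_succ_apply]
    exact ih (hh.comp_measurePreserving mp_phi)

lemma integ_coef {h : Omg → ℂ} (hh : MemLp h 2 mOmg) (k : ℤ × ℤ) :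
    Integrable (fun p => h p * (starRingEnd ℂ) (eB k p)) mOmg := by
  have hi : Integrable h mOmg := hh.integrable one_le_two
  have h2 : Integrable (fun p => (starRingEnd ℂ) (eB k p) * h p) mOmg :=
    hi.bdd_mul (c := 1)
      (((continuous_eB k).star).aestronglyMeasurable)
      (ae_of_all _ fun p => by
        show ‖(starRingEnd ℂ) (eB k p)‖ ≤ 1
        rw [RCLike.norm_conj, norm_eB])
  exact h2.congr (ae_of_all _ fun p => mul_comm _ _)

/-- Lemma 2.5(ii):
`D_y^m C_φ^n = ∑_{j=0}^m binom(m,j) (2n)^{m−j} C_φ^n D_x^{m−j} D_y^j`. -/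
theorem stmt18 (m n : ℕ) (hm : 1 ≤ m) (hn : 1 ≤ n) (f : Omg → ℂ)
    (hf : MemHs ((m : ℝ), (m : ℝ)) f)
    (g : ℕ → Omg → ℂ) (hg : ∀ j ≤ m, IsD (m - j) j f (g j)) :
    IsD 0 m (Cphi^[n] f)
      (fun p => ∑ j ∈ Finset.range (m + 1),
        (m.choose j : ℂ) * (2 * (n : ℂ)) ^ (m - j) * Cphi^[n] (g j) p) := by
  have hgL2 : ∀ j ∈ Finset.range (m + 1), MemLp (Cphi^[n] (g j)) 2 mOmg := fun j hj =>
    memLp_iter ((hg j (Finset.mem_range_succ_iff.mp hj)).2.1) n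
  refine ⟨memLp_iter hf.1 n, ?_, ?_⟩
  · exact memLp_finsetSum _ fun j hj => ((hgL2 j hj).const_mul _)
  · intro k
    have h1 : coef k (fun p => ∑ j ∈ Finset.range (m + 1),
          (m.choose j : ℂ) * (2 * (n : ℂ)) ^ (m - j) * Cphi^[n] (g j) p)
        = ∑ j ∈ Finset.range (m + 1),
          (m.choose j : ℂ) * (2 * (n : ℂ)) ^ (m - j) * coef k (Cphi^[n] (g j)) := by
      unfold coef
      have hint : ∀ j ∈ Finset.range (m + 1), Integrable
          (fun p => (m.choose j : ℂ) * (2 * (n : ℂ)) ^ (m - j)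
            * (Cphi^[n] (g j) p * (starRingEnd ℂ) (eB k p))) mOmg := fun j hj =>
        (integ_coef (hgL2 j hj) k).const_mul _
      calc ∫ p, (∑ j ∈ Finset.range (m + 1),
              (m.choose j : ℂ) * (2 * (n : ℂ)) ^ (m - j) * Cphi^[n] (g j) p)
              * (starRingEnd ℂ) (eB k p) ∂mOmg
          = ∫ p, ∑ j ∈ Finset.range (m + 1),
              (m.choose j : ℂ) * (2 * (n : ℂ)) ^ (m - j)
              * (Cphi^[n] (g j) p * (starRingEnd ℂ) (eB k p)) ∂mOmg := by
            refine integral_congr_ae (ae_of_all _ fun p => ?_)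
            dsimp only
            rw [Finset.sum_mul]
            exact Finset.sum_congr rfl fun j hj => by ring
        _ = ∑ j ∈ Finset.range (m + 1), ∫ p,
              (m.choose j : ℂ) * (2 * (n : ℂ)) ^ (m - j)
              * (Cphi^[n] (g j) p * (starRingEnd ℂ) (eB k p)) ∂mOmg :=
            integral_finset_sum _ hint
        _ = ∑ j ∈ Finset.range (m + 1),
              (m.choose j : ℂ) * (2 * (n : ℂ)) ^ (m - j)
              * ∫ p, Cphi^[n] (g j) p * (starRingEnd ℂ) (eB k p) ∂mOmg := by
            exact Finset.sum_congr rfl fun j hj => integral_const_mul _ _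
    rw [h1]
    have h2 : ∀ j ≤ m, coef k (Cphi^[n] (g j))
        = (-1 : ℂ) ^ ((n : ℤ) * k.1)
          * ((Complex.I * (k.1 : ℂ)) ^ (m - j)
            * (2 * Complex.I * (((k.2 - (n : ℤ) * k.1 : ℤ)) : ℂ)) ^ j
            * coef (k.1, k.2 - (n : ℤ) * k.1) f) := by
      intro j hj
      rw [coef_iter, (hg j hj).2.2 (k.1, k.2 - (n : ℤ) * k.1)]
    rw [coef_iter n k f, pow_zero, one_mul]
    calc ∑ j ∈ Finset.range (m + 1),
          (m.choose j : ℂ) * (2 * (n : ℂ)) ^ (m - j) * coef k (Cphi^[n] (g j))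
        = ∑ j ∈ Finset.range (m + 1),
            (2 * Complex.I * (((k.2 - (n : ℤ) * k.1 : ℤ)) : ℂ)) ^ j
            * (2 * (n : ℂ) * (Complex.I * (k.1 : ℂ))) ^ (m - j) * (m.choose j : ℂ)
            * ((-1 : ℂ) ^ ((n : ℤ) * k.1) * coef (k.1, k.2 - (n : ℤ) * k.1) f) := by
          refine Finset.sum_congr rfl fun j hj => ?_
          rw [h2 j (Finset.mem_range_succ_iff.mp hj), mul_pow (2 * (n : ℂ))]
          ring
      _ = (2 * Complex.I * (k.2 : ℂ)) ^ m
            * ((-1 : ℂ) ^ ((n : ℤ) * k.1) * coef (k.1, k.2 - (n : ℤ) * k.1) f) := by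
          rw [← Finset.sum_mul]
          congr 1
          rw [show (2 * Complex.I * (k.2 : ℂ))
              = 2 * Complex.I * (((k.2 - (n : ℤ) * k.1 : ℤ)) : ℂ)
                + 2 * (n : ℂ) * (Complex.I * (k.1 : ℂ)) by push_cast; ring,
            add_pow]

end
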